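/- For all integers m,n ≥ 1, every element of Γ̄ is a spanning tree of the grid graph L on {0,…,m}×{0,…,n}: for every choice function f assigning to each interior vertex v one of the two edges of E_v, the edge set B ∪ {f(v) : v interior} has exactly (m+1)(n+1) − 1 edges and its spanning subgraph is connected and acyclic. -/

import Mathlib

open scoped Classical

noncomputable section

/-- Vertices of the grid on `{0,…,m} × {0,…,n}`. -/
abbrev GridV (m n : ℕ) := Fin (m + 1) × Fin (n + 1)

/-- The grid graph on `{0,…,m} × {0,…,n}`: two vertices are adjacent iff they differ by 1
in exactly one coordinate. -/
def gridL (m n : ℕ) : SimpleGraph (GridV m n) :=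
  SimpleGraph.fromRel fun v w =>
    (v.1 = w.1 ∧ v.2.val + 1 = w.2.val) ∨ (v.2 = w.2 ∧ v.1.val + 1 = w.1.val)

/-- The set `B` of boundary edges: the bottom-row edges together with the
right-column edges. -/
def boundaryB (m n : ℕ) : Finset (Sym2 (GridV m n)) :=
  ((Finset.univ : Finset (Fin m)).image fun i =>
      s(((i.castSucc : Fin (m + 1)), (0 : Fin (n + 1))),
        ((i.succ : Fin (m + 1)), (0 : Fin (n + 1))))) ∪
    ((Finset.univ : Finset (Fin n)).image fun j =>
      s((Fin.last m, (j.castSucc : Fin (n + 1))),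
        (Fin.last m, (j.succ : Fin (n + 1)))))

/-- A vertex `v = (i, j)` is interior if `j ≥ 1` and `i ≤ m - 1`. -/
def Interior (m n : ℕ) (v : GridV m n) : Prop := v.1.val < m ∧ 1 ≤ v.2.val

/-- The finset of interior vertices. -/
def interiorFinset (m n : ℕ) : Finset (GridV m n) :=
  Finset.univ.filter fun v : GridV m n => v.1.val < m ∧ 1 ≤ v.2.val

/-- The edge to the right of `v` (for interior `v`, i.e. when `v.1 < m`). -/
def rightEdge (m n : ℕ) (v : GridV m n) : Sym2 (GridV m n) :=
  s(v, ((⟨min (v.1.val + 1) m, by omega⟩ : Fin (m + 1)), v.2))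

/-- The edge below `v` (for interior `v`, i.e. when `v.2 ≥ 1`). -/
def belowEdge (m n : ℕ) (v : GridV m n) : Sym2 (GridV m n) :=
  s(v, (v.1, (⟨v.2.val - 1, lt_of_le_of_lt (Nat.sub_le _ _) v.2.isLt⟩ : Fin (n + 1))))

/-- The pair `E_v` of candidate edges at an interior vertex `v`: the edge to the right of
`v` and the edge below `v`. -/
def Ev (m n : ℕ) (v : GridV m n) : Finset (Sym2 (GridV m n)) :=
  {rightEdge m n v, belowEdge m n v}

/-- The edge set `B ∪ {f(v) : v interior}` determined by a choice function `f`
(`f v = true` chooses the edge to the right of `v`, `f v = false` the edge below `v`). -/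
def treeOf (m n : ℕ) (f : GridV m n → Bool) : Finset (Sym2 (GridV m n)) :=
  boundaryB m n ∪
    (interiorFinset m n).image fun v => if f v then rightEdge m n v else belowEdge m n v

/-- The collection `Γ̄` of all edge sets `B ∪ {f(v) : v interior}`. -/
def GammaBar (m n : ℕ) : Finset (Finset (Sym2 (GridV m n))) :=
  (Finset.univ : Finset (GridV m n → Bool)).image (treeOf m n)

lemma walk_exists_cons {V : Type*} {G : SimpleGraph V} {x z : V} (p : G.Walk x z) (h : x ≠ z) :
    ∃ (y : V) (hadj : G.Adj x y) (q : G.Walk y z), p = SimpleGraph.Walk.cons hadj q := by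
  cases p with
  | nil => exact absurd rfl h
  | cons hadj q => exact ⟨_, hadj, q, rfl⟩

lemma cycle_exists_cons {V : Type*} {G : SimpleGraph V} {x : V} (c : G.Walk x x)
    (hc : c.IsCycle) :
    ∃ (y : V) (hadj : G.Adj x y) (q : G.Walk y x), c = SimpleGraph.Walk.cons hadj q := by
  cases c with
  | nil => exact absurd rfl hc.ne_nil
  | cons hadj q => exact ⟨_, hadj, q, rfl⟩

lemma isAcyclic_of_potential {V : Type*} (G : SimpleGraph V) (μ : V → ℕ)
    (hne : ∀ ⦃a b⦄, G.Adj a b → μ a ≠ μ b)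
    (huniq : ∀ ⦃a b c⦄, G.Adj a b → G.Adj a c → μ b < μ a → μ c < μ a → b = c) :
    G.IsAcyclic := by
  classical
  intro u c hc
  obtain ⟨a, hamem, hamax⟩ : ∃ a ∈ c.support, ∀ b ∈ c.support, μ b ≤ μ a := by
    rcases ho : c.support.argmax μ with _ | a
    · exact absurd (List.argmax_eq_none.mp ho) c.support_ne_nil
    · exact ⟨a, List.argmax_mem ho, fun b hb => List.le_of_mem_argmax hb ho⟩
  have hc' := hc.rotate hamem
  set c' := c.rotate a hamem with hc'def
  have hsup : ∀ b ∈ c'.support, μ b ≤ μ a := by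
    intro b hb
    rw [c'.support_eq_cons] at hb
    rcases List.mem_cons.mp hb with rfl | hb
    · exact le_rfl
    · exact hamax b (List.mem_of_mem_tail ((SimpleGraph.Walk.support_rotate c a hamem).mem_iff.mp hb))
  obtain ⟨b, hab, q, hq⟩ := cycle_exists_cons c' hc'
  obtain ⟨y, hay, q2, hq2⟩ := walk_exists_cons q.reverse hab.ne'.symm
  have hyq : s(a, y) ∈ q.edges := by
    have : s(a, y) ∈ q.reverse.edges := by rw [hq2]; simp
    rwa [SimpleGraph.Walk.edges_reverse, List.mem_reverse] at this
  have hbsup : b ∈ c'.support := by rw [hq]; simp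
  have hysup : y ∈ c'.support := by
    rw [hq, SimpleGraph.Walk.support_cons]
    exact List.mem_cons_of_mem _ (q.snd_mem_support_of_mem_edges hyq)
  have hblt : μ b < μ a := lt_of_le_of_ne (hsup b hbsup) (fun h => hne hab h.symm)
  have hylt : μ y < μ a := lt_of_le_of_ne (hsup y hysup) (fun h => hne hay h.symm)
  have hby : b = y := huniq hab hay hblt hylt
  have hnodup : ¬ s(a, b) ∈ q.edges := by
    have := hc'.edges_nodup
    rw [hq, SimpleGraph.Walk.edges_cons] at this
    exact (List.nodup_cons.mp this).1
  exact hnodup (hby ▸ hyq)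

namespace GridAux

def root (m n : ℕ) : GridV m n := (Fin.last m, 0)

def otherR (m n : ℕ) (v : GridV m n) : GridV m n :=
  ((⟨min (v.1.val + 1) m, by omega⟩ : Fin (m + 1)), v.2)

def otherB (m n : ℕ) (v : GridV m n) : GridV m n :=
  (v.1, (⟨v.2.val - 1, lt_of_le_of_lt (Nat.sub_le _ _) v.2.isLt⟩ : Fin (n + 1)))

def par (m n : ℕ) (f : GridV m n → Bool) (v : GridV m n) : GridV m n :=
  if v.1.val < m ∧ 1 ≤ v.2.val then (if f v then otherR m n v else otherB m n v)
  else if 1 ≤ v.2.val then otherB m n v else otherR m n v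

def pot (m n : ℕ) (v : GridV m n) : ℕ := (m - v.1.val) + v.2.val

lemma rightEdge_eq (m n : ℕ) (v : GridV m n) : rightEdge m n v = s(v, otherR m n v) := rfl

lemma belowEdge_eq (m n : ℕ) (v : GridV m n) : belowEdge m n v = s(v, otherB m n v) := rfl

lemma ne_root_iff (m n : ℕ) (v : GridV m n) :
    v ≠ root m n ↔ (v.1.val < m ∨ 1 ≤ v.2.val) := by
  have h1 := v.1.isLt
  simp only [root, ne_eq, Prod.ext_iff, not_and_or, Fin.ext_iff, Fin.val_last, Fin.val_zero]
  omega

lemma pot_par_lt (m n : ℕ) (f : GridV m n → Bool) (v : GridV m n) (hv : v ≠ root m n) :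
    pot m n (par m n f v) < pot m n v := by
  rw [ne_root_iff] at hv
  have h1 := v.1.isLt
  unfold par
  split_ifs <;> simp_all [otherR, otherB, pot] <;>
    (have h0 : ((0 : Fin (n + 1)) : ℕ) = 0 := rfl) <;> omega

lemma adj_par (m n : ℕ) (f : GridV m n → Bool) (v : GridV m n) (hv : v ≠ root m n) :
    (gridL m n).Adj v (par m n f v) := by
  rw [ne_root_iff] at hv
  have h1 := v.1.isLt
  unfold par
  rw [gridL]
  split_ifs with h h2 h3 <;>
    simp only [SimpleGraph.fromRel_adj, otherR, otherB, ne_eq, Prod.mk.injEq, Prod.ext_iff,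
      Fin.ext_iff] <;>
    constructor <;> simp <;> omega

lemma treeOf_eq (m n : ℕ) (f : GridV m n → Bool) :
    treeOf m n f =
      (Finset.univ.filter (fun v : GridV m n => v ≠ root m n)).image
        (fun v => s(v, par m n f v)) := by
  ext e
  simp only [treeOf, boundaryB, Finset.mem_union, Finset.mem_image, Finset.mem_filter,
    Finset.mem_univ, true_and, interiorFinset]
  constructor
  · rintro ((⟨i, rfl⟩ | ⟨j, rfl⟩) | ⟨v, hv, rfl⟩)
    · refine ⟨(i.castSucc, 0), ?_, ?_⟩
      · rw [ne_root_iff]; left; simpa using i.isLt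
      · have hnin : ¬ (((i.castSucc : Fin (m+1)), (0 : Fin (n+1))).1.val < m ∧
            1 ≤ ((i.castSucc : Fin (m+1)), (0 : Fin (n+1))).2.val) := by simp
        rw [par, if_neg hnin, if_neg (by simp)]
        have h2 : ((i.succ : Fin (m+1)), (0 : Fin (n+1))) =
            otherR m n ((i.castSucc : Fin (m+1)), (0 : Fin (n+1))) := by
          have := i.isLt
          simp only [otherR, Prod.ext_iff, Fin.ext_iff, Fin.val_succ, Fin.coe_castSucc]
          exact ⟨by omega, trivial⟩
        rw [h2]
    · refine ⟨(Fin.last m, j.succ), ?_, ?_⟩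
      · rw [ne_root_iff]; right; simp [Fin.val_succ]
      · have hnin : ¬ (((Fin.last m : Fin (m+1)), (j.succ : Fin (n+1))).1.val < m ∧
            1 ≤ ((Fin.last m : Fin (m+1)), (j.succ : Fin (n+1))).2.val) := by
          simp [Fin.val_last]
        rw [par, if_neg hnin, if_pos (by simp [Fin.val_succ])]
        rw [Sym2.eq_swap]
        have h2 : ((Fin.last m : Fin (m+1)), (j.castSucc : Fin (n+1))) =
            otherB m n ((Fin.last m : Fin (m+1)), (j.succ : Fin (n+1))) := by
          simp only [otherB, Prod.ext_iff, Fin.ext_iff, Fin.val_succ, Fin.coe_castSucc]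
          exact ⟨trivial, by omega⟩
        rw [h2]
    · refine ⟨v, ?_, ?_⟩
      · rw [ne_root_iff]; left; exact hv.1
      · rw [par, if_pos hv]
        split_ifs <;> rfl
  · rintro ⟨v, hv, rfl⟩
    rw [ne_root_iff] at hv
    by_cases hint : v.1.val < m ∧ 1 ≤ v.2.val
    · right
      refine ⟨v, hint, ?_⟩
      rw [par, if_pos hint]
      split_ifs <;> rfl
    · left
      by_cases hj : 1 ≤ v.2.val
      · have him : v.1.val = m := by
          have := v.1.isLt
          rcases hv with h | h
          · exact absurd ⟨h, hj⟩ hint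
          · omega
        right
        refine ⟨⟨v.2.val - 1, by omega⟩, ?_⟩
        rw [par, if_neg hint, if_pos hj, Sym2.eq_swap]
        have hvlast : v.1 = Fin.last m := Fin.ext (by simpa [Fin.val_last] using him)
        have h2 : (Fin.last m, ((⟨v.2.val - 1, by omega⟩ : Fin n).castSucc : Fin (n+1))) =
            otherB m n v := by
          simp only [otherB, Prod.ext_iff, Fin.ext_iff, Fin.coe_castSucc, Fin.val_last]
          exact ⟨by omega, trivial⟩
        have h3 : (Fin.last m, ((⟨v.2.val - 1, by omega⟩ : Fin n).succ : Fin (n+1))) = v := by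
          refine Prod.ext_iff.mpr ⟨hvlast.symm, Fin.ext ?_⟩
          simp only [Fin.val_succ]
          omega
        rw [h2, h3]
      · have hj0 : v.2.val = 0 := by omega
        have him : v.1.val < m := by
          rcases hv with h | h
          · exact h
          · omega
        left
        refine ⟨⟨v.1.val, him⟩, ?_⟩
        rw [par, if_neg hint, if_neg hj]
        have hv2 : v.2 = 0 := Fin.ext (by simpa using hj0)
        have h2 : (((⟨v.1.val, him⟩ : Fin m).castSucc : Fin (m+1)), (0 : Fin (n+1))) = v := by
          refine Prod.ext_iff.mpr ⟨Fin.ext ?_, hv2.symm⟩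
          simp
        have h3 : (((⟨v.1.val, him⟩ : Fin m).succ : Fin (m+1)), (0 : Fin (n+1))) =
            otherR m n v := by
          simp only [otherR, Prod.ext_iff, Fin.ext_iff, Fin.val_succ]
          refine ⟨by omega, by simp [hv2]⟩
        rw [h2, h3]

lemma injOn_par (m n : ℕ) (f : GridV m n → Bool) :
    Set.InjOn (fun v => s(v, par m n f v))
      ↑(Finset.univ.filter (fun v : GridV m n => v ≠ root m n)) := by
  intro v hv w hw h
  simp only [Finset.coe_filter, Set.mem_setOf_eq, Finset.mem_univ, true_and] at hv hw
  rcases Sym2.eq_iff.mp h with ⟨h1, h2⟩ | ⟨h1, h2⟩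
  · exact h1
  · have p1 := pot_par_lt m n f v hv
    have p2 := pot_par_lt m n f w hw
    rw [h2] at p1
    rw [← h1] at p2
    omega

lemma treeOf_card (m n : ℕ) (f : GridV m n → Bool) :
    (treeOf m n f).card = (m + 1) * (n + 1) - 1 := by
  rw [treeOf_eq, Finset.card_image_of_injOn (injOn_par m n f)]
  have : (Finset.univ.filter (fun v : GridV m n => v ≠ root m n)) =
      Finset.univ.erase (root m n) := by
    ext v; simp [Finset.mem_erase, and_comm]
  rw [this, Finset.card_erase_of_mem (Finset.mem_univ _), Finset.card_univ]
  simp [Fintype.card_prod]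

lemma treeOf_subset (m n : ℕ) (f : GridV m n → Bool) :
    (↑(treeOf m n f) : Set (Sym2 (GridV m n))) ⊆ (gridL m n).edgeSet := by
  intro e he
  rw [Finset.mem_coe, treeOf_eq, Finset.mem_image] at he
  obtain ⟨v, hv, rfl⟩ := he
  simp only [Finset.mem_filter, Finset.mem_univ, true_and] at hv
  exact (gridL m n).mem_edgeSet.mpr (adj_par m n f v hv)

lemma fromEdgeSet_adj_par (m n : ℕ) (f : GridV m n → Bool) (v : GridV m n)
    (hv : v ≠ root m n) :
    (SimpleGraph.fromEdgeSet (↑(treeOf m n f) : Set (Sym2 (GridV m n)))).Adj v (par m n f v) := by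
  rw [SimpleGraph.fromEdgeSet_adj]
  refine ⟨?_, ?_⟩
  · rw [Finset.mem_coe, treeOf_eq, Finset.mem_image]
    exact ⟨v, Finset.mem_filter.mpr ⟨Finset.mem_univ _, hv⟩, rfl⟩
  · intro h
    have := pot_par_lt m n f v hv
    rw [← h] at this
    omega

lemma pot_eq_zero (m n : ℕ) (v : GridV m n) (h : pot m n v = 0) : v = root m n := by
  have h1 := v.1.isLt
  unfold pot at h
  refine Prod.ext_iff.mpr ⟨Fin.ext ?_, Fin.ext ?_⟩
  · simp only [root, Fin.val_last]; omega
  · simp only [root, Fin.val_zero]; omega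

lemma treeOf_reach (m n : ℕ) (f : GridV m n → Bool) :
    ∀ (k : ℕ) (v : GridV m n), pot m n v ≤ k →
      (SimpleGraph.fromEdgeSet (↑(treeOf m n f) : Set (Sym2 (GridV m n)))).Reachable
        v (root m n) := by
  intro k
  induction k with
  | zero =>
    intro v hv
    rw [pot_eq_zero m n v (Nat.le_zero.mp hv)]
  | succ k ih =>
    intro v hv
    by_cases hr : v = root m n
    · rw [hr]
    · have hlt := pot_par_lt m n f v hr
      exact (fromEdgeSet_adj_par m n f v hr).reachable.trans (ih _ (by omega))

lemma treeOf_connected (m n : ℕ) (f : GridV m n → Bool) :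
    (SimpleGraph.fromEdgeSet (↑(treeOf m n f) : Set (Sym2 (GridV m n)))).Connected := by
  rw [SimpleGraph.connected_iff]
  refine ⟨fun u v => ?_, ⟨root m n⟩⟩
  exact (treeOf_reach m n f _ u le_rfl).trans (treeOf_reach m n f _ v le_rfl).symm

lemma adj_cases (m n : ℕ) (f : GridV m n → Bool) {a b : GridV m n}
    (hab : (SimpleGraph.fromEdgeSet (↑(treeOf m n f) : Set (Sym2 (GridV m n)))).Adj a b)
    (hpot : pot m n b < pot m n a) : a ≠ root m n ∧ b = par m n f a := by
  rw [SimpleGraph.fromEdgeSet_adj, Finset.mem_coe, treeOf_eq, Finset.mem_image] at hab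
  obtain ⟨⟨v, hv, heq⟩, -⟩ := hab
  simp only [Finset.mem_filter, Finset.mem_univ, true_and] at hv
  rcases Sym2.eq_iff.mp heq with ⟨h1, h2⟩ | ⟨h1, h2⟩
  · subst h1; exact ⟨hv, h2.symm⟩
  · subst h1; subst h2
    have := pot_par_lt m n f v hv
    omega

lemma treeOf_acyclic (m n : ℕ) (f : GridV m n → Bool) :
    (SimpleGraph.fromEdgeSet (↑(treeOf m n f) : Set (Sym2 (GridV m n)))).IsAcyclic := by
  apply isAcyclic_of_potential _ (pot m n)
  · intro a b hab h
    rw [SimpleGraph.fromEdgeSet_adj, Finset.mem_coe, treeOf_eq, Finset.mem_image] at hab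
    obtain ⟨⟨v, hv, heq⟩, -⟩ := hab
    simp only [Finset.mem_filter, Finset.mem_univ, true_and] at hv
    have hlt := pot_par_lt m n f v hv
    rcases Sym2.eq_iff.mp heq with ⟨h1, h2⟩ | ⟨h1, h2⟩ <;> subst h1 <;> subst h2 <;> omega
  · intro a b c hab hac hb hc
    obtain ⟨-, h1⟩ := adj_cases m n f hab hb
    obtain ⟨-, h2⟩ := adj_cases m n f hac hc
    rw [h1, h2]

end GridAux

/-- every element of `Γ̄` is a spanning tree of the grid graph `L` on
`{0,…,m}×{0,…,n}`: for every choice function `f`, the edge set `B ∪ {f(v) : v interior}`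
has exactly `(m+1)(n+1) - 1` edges and its spanning subgraph is connected and acyclic. -/
theorem treeOf_isSpanningTree (m n : ℕ) (hm : 1 ≤ m) (hn : 1 ≤ n)
    (f : GridV m n → Bool) :
    (treeOf m n f).card = (m + 1) * (n + 1) - 1 ∧
    (↑(treeOf m n f) : Set (Sym2 (GridV m n))) ⊆ (gridL m n).edgeSet ∧
    (SimpleGraph.fromEdgeSet (↑(treeOf m n f) : Set (Sym2 (GridV m n)))).Connected ∧
    (SimpleGraph.fromEdgeSet (↑(treeOf m n f) : Set (Sym2 (GridV m n)))).IsAcyclic :=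
  ⟨GridAux.treeOf_card m n f, GridAux.treeOf_subset m n f, GridAux.treeOf_connected m n f,
    GridAux.treeOf_acyclic m n f⟩
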